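/- For every real x and every λ ∈ [0, 3/8], |e^{ix} − 1 − ix + x²/2 − λ(ix)³/6| ≤ (1−λ)·|x|³/6; in particular q₃(λ) = 1 − λ for 0 ≤ λ ≤ 3/8, where q₃(λ) = sup_{x>0} (6/x³)|e^{ix} − 1 − ix − (ix)²/2 − λ(ix)³/6|. -/

import Mathlib

open Real

private lemma nonneg_of_deriv_aux (F f : ℝ → ℝ) (h0 : F 0 = 0)
    (hd : ∀ y : ℝ, HasDerivAt F (f y) y) (hf : ∀ y : ℝ, 0 ≤ y → 0 ≤ f y)
    {x : ℝ} (hx : 0 ≤ x) : 0 ≤ F x := by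
  have hmono : MonotoneOn F (Set.Ici (0:ℝ)) := by
    apply monotoneOn_of_deriv_nonneg (convex_Ici 0)
    · exact fun y _ => (hd y).continuousAt.continuousWithinAt
    · exact fun y _ => (hd y).differentiableAt.differentiableWithinAt
    · intro y hy
      rw [(hd y).deriv]
      rw [interior_Ici] at hy
      exact hf y (le_of_lt hy)
  have := hmono (Set.self_mem_Ici) (by exact hx) hx
  simpa [h0] using this

private lemma cos_ge2 (x : ℝ) : 1 - x^2/2 ≤ Real.cos x := Real.one_sub_sq_div_two_le_cos

private lemma sin_ge3 (x : ℝ) (hx : 0 ≤ x) : x - x^3/6 ≤ Real.sin x := by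
  have h := nonneg_of_deriv_aux (fun y => Real.sin y - (y - y^3/6))
      (fun y => Real.cos y - (1 - y^2/2)) (by norm_num) ?_ ?_ hx
  · linarith [h]
  · intro y
    have hp : HasDerivAt (fun y : ℝ => y - y^3/6) (1 - 3*y^2/6) y :=
      (hasDerivAt_id y).sub ((hasDerivAt_pow 3 y).div_const 6)
    have := (Real.hasDerivAt_sin y).sub hp
    exact this.congr_deriv (by push_cast; ring)
  · intro y _; linarith [cos_ge2 y]

private lemma cos_le4 (x : ℝ) (hx : 0 ≤ x) : Real.cos x ≤ 1 - x^2/2 + x^4/24 := by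
  have h := nonneg_of_deriv_aux (fun y : ℝ => (1 - y^2/2 + y^4/24) - Real.cos y) (fun y : ℝ => (-y + y^3/6) - (-Real.sin y)) (by norm_num) ?_ ?_ hx
  · linarith [h]
  · intro y
    have hp : HasDerivAt (fun y : ℝ => 1 - y^2/2 + y^4/24) (-y + y^3/6) y := by
      have h0 := (((hasDerivAt_const y (1:ℝ)).sub ((hasDerivAt_pow 2 y).div_const 2)).add ((hasDerivAt_pow 4 y).div_const 24))
      exact h0.congr_deriv (by push_cast; ring)
    exact hp.sub (Real.hasDerivAt_cos y)
  · intro y hy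
    have hprev := sin_ge3 y hy
    linarith

private lemma sin_le5 (x : ℝ) (hx : 0 ≤ x) : Real.sin x ≤ x - x^3/6 + x^5/120 := by
  have h := nonneg_of_deriv_aux (fun y : ℝ => (y - y^3/6 + y^5/120) - Real.sin y) (fun y : ℝ => (1 - y^2/2 + y^4/24) - Real.cos y) (by norm_num) ?_ ?_ hx
  · linarith [h]
  · intro y
    have hp : HasDerivAt (fun y : ℝ => y - y^3/6 + y^5/120) (1 - y^2/2 + y^4/24) y := by
      have h0 := (((hasDerivAt_id y).sub ((hasDerivAt_pow 3 y).div_const 6)).add ((hasDerivAt_pow 5 y).div_const 120))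
      exact h0.congr_deriv (by push_cast; ring)
    exact hp.sub (Real.hasDerivAt_sin y)
  · intro y hy
    have hprev := cos_le4 y hy
    linarith

private lemma cos_ge6 (x : ℝ) (hx : 0 ≤ x) : 1 - x^2/2 + x^4/24 - x^6/720 ≤ Real.cos x := by
  have h := nonneg_of_deriv_aux (fun y : ℝ => Real.cos y - (1 - y^2/2 + y^4/24 - y^6/720)) (fun y : ℝ => (-Real.sin y) - (-y + y^3/6 - y^5/120)) (by norm_num) ?_ ?_ hx
  · linarith [h]
  · intro y
    have hp : HasDerivAt (fun y : ℝ => 1 - y^2/2 + y^4/24 - y^6/720) (-y + y^3/6 - y^5/120) y := by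
      have h0 := ((((hasDerivAt_const y (1:ℝ)).sub ((hasDerivAt_pow 2 y).div_const 2)).add ((hasDerivAt_pow 4 y).div_const 24)).sub ((hasDerivAt_pow 6 y).div_const 720))
      exact h0.congr_deriv (by push_cast; ring)
    exact (Real.hasDerivAt_cos y).sub hp
  · intro y hy
    have hprev := sin_le5 y hy
    linarith

private lemma sin_ge7 (x : ℝ) (hx : 0 ≤ x) : x - x^3/6 + x^5/120 - x^7/5040 ≤ Real.sin x := by
  have h := nonneg_of_deriv_aux (fun y : ℝ => Real.sin y - (y - y^3/6 + y^5/120 - y^7/5040)) (fun y : ℝ => Real.cos y - (1 - y^2/2 + y^4/24 - y^6/720)) (by norm_num) ?_ ?_ hx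
  · linarith [h]
  · intro y
    have hp : HasDerivAt (fun y : ℝ => y - y^3/6 + y^5/120 - y^7/5040) (1 - y^2/2 + y^4/24 - y^6/720) y := by
      have h0 := ((((hasDerivAt_id y).sub ((hasDerivAt_pow 3 y).div_const 6)).add ((hasDerivAt_pow 5 y).div_const 120)).sub ((hasDerivAt_pow 7 y).div_const 5040))
      exact h0.congr_deriv (by push_cast; ring)
    exact (Real.hasDerivAt_sin y).sub hp
  · intro y hy
    have hprev := cos_ge6 y hy
    linarith

private lemma cos_le8 (x : ℝ) (hx : 0 ≤ x) : Real.cos x ≤ 1 - x^2/2 + x^4/24 - x^6/720 + x^8/40320 := by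
  have h := nonneg_of_deriv_aux (fun y : ℝ => (1 - y^2/2 + y^4/24 - y^6/720 + y^8/40320) - Real.cos y) (fun y : ℝ => (-y + y^3/6 - y^5/120 + y^7/5040) - (-Real.sin y)) (by norm_num) ?_ ?_ hx
  · linarith [h]
  · intro y
    have hp : HasDerivAt (fun y : ℝ => 1 - y^2/2 + y^4/24 - y^6/720 + y^8/40320) (-y + y^3/6 - y^5/120 + y^7/5040) y := by
      have h0 := (((((hasDerivAt_const y (1:ℝ)).sub ((hasDerivAt_pow 2 y).div_const 2)).add ((hasDerivAt_pow 4 y).div_const 24)).sub ((hasDerivAt_pow 6 y).div_const 720)).add ((hasDerivAt_pow 8 y).div_const 40320))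
      exact h0.congr_deriv (by push_cast; ring)
    exact hp.sub (Real.hasDerivAt_cos y)
  · intro y hy
    have hprev := sin_ge7 y hy
    linarith

private lemma sin_le9 (x : ℝ) (hx : 0 ≤ x) : Real.sin x ≤ x - x^3/6 + x^5/120 - x^7/5040 + x^9/362880 := by
  have h := nonneg_of_deriv_aux (fun y : ℝ => (y - y^3/6 + y^5/120 - y^7/5040 + y^9/362880) - Real.sin y) (fun y : ℝ => (1 - y^2/2 + y^4/24 - y^6/720 + y^8/40320) - Real.cos y) (by norm_num) ?_ ?_ hx
  · linarith [h]
  · intro y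
    have hp : HasDerivAt (fun y : ℝ => y - y^3/6 + y^5/120 - y^7/5040 + y^9/362880) (1 - y^2/2 + y^4/24 - y^6/720 + y^8/40320) y := by
      have h0 := (((((hasDerivAt_id y).sub ((hasDerivAt_pow 3 y).div_const 6)).add ((hasDerivAt_pow 5 y).div_const 120)).sub ((hasDerivAt_pow 7 y).div_const 5040)).add ((hasDerivAt_pow 9 y).div_const 362880))
      exact h0.congr_deriv (by push_cast; ring)
    exact hp.sub (Real.hasDerivAt_sin y)
  · intro y hy
    have hprev := cos_le8 y hy
    linarith

private lemma cos_ge10 (x : ℝ) (hx : 0 ≤ x) : 1 - x^2/2 + x^4/24 - x^6/720 + x^8/40320 - x^10/3628800 ≤ Real.cos x := by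
  have h := nonneg_of_deriv_aux (fun y : ℝ => Real.cos y - (1 - y^2/2 + y^4/24 - y^6/720 + y^8/40320 - y^10/3628800)) (fun y : ℝ => (-Real.sin y) - (-y + y^3/6 - y^5/120 + y^7/5040 - y^9/362880)) (by norm_num) ?_ ?_ hx
  · linarith [h]
  · intro y
    have hp : HasDerivAt (fun y : ℝ => 1 - y^2/2 + y^4/24 - y^6/720 + y^8/40320 - y^10/3628800) (-y + y^3/6 - y^5/120 + y^7/5040 - y^9/362880) y := by
      have h0 := ((((((hasDerivAt_const y (1:ℝ)).sub ((hasDerivAt_pow 2 y).div_const 2)).add ((hasDerivAt_pow 4 y).div_const 24)).sub ((hasDerivAt_pow 6 y).div_const 720)).add ((hasDerivAt_pow 8 y).div_const 40320)).sub ((hasDerivAt_pow 10 y).div_const 3628800))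
      exact h0.congr_deriv (by push_cast; ring)
    exact (Real.hasDerivAt_cos y).sub hp
  · intro y hy
    have hprev := sin_le9 y hy
    linarith

private lemma sin_ge11 (x : ℝ) (hx : 0 ≤ x) : x - x^3/6 + x^5/120 - x^7/5040 + x^9/362880 - x^11/39916800 ≤ Real.sin x := by
  have h := nonneg_of_deriv_aux (fun y : ℝ => Real.sin y - (y - y^3/6 + y^5/120 - y^7/5040 + y^9/362880 - y^11/39916800)) (fun y : ℝ => Real.cos y - (1 - y^2/2 + y^4/24 - y^6/720 + y^8/40320 - y^10/3628800)) (by norm_num) ?_ ?_ hx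
  · linarith [h]
  · intro y
    have hp : HasDerivAt (fun y : ℝ => y - y^3/6 + y^5/120 - y^7/5040 + y^9/362880 - y^11/39916800) (1 - y^2/2 + y^4/24 - y^6/720 + y^8/40320 - y^10/3628800) y := by
      have h0 := ((((((hasDerivAt_id y).sub ((hasDerivAt_pow 3 y).div_const 6)).add ((hasDerivAt_pow 5 y).div_const 120)).sub ((hasDerivAt_pow 7 y).div_const 5040)).add ((hasDerivAt_pow 9 y).div_const 362880)).sub ((hasDerivAt_pow 11 y).div_const 39916800))
      exact h0.congr_deriv (by push_cast; ring)
    exact (Real.hasDerivAt_sin y).sub hp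
  · intro y hy
    have hprev := cos_ge10 y hy
    linarith

private lemma cos_le12 (x : ℝ) (hx : 0 ≤ x) : Real.cos x ≤ 1 - x^2/2 + x^4/24 - x^6/720 + x^8/40320 - x^10/3628800 + x^12/479001600 := by
  have h := nonneg_of_deriv_aux (fun y : ℝ => (1 - y^2/2 + y^4/24 - y^6/720 + y^8/40320 - y^10/3628800 + y^12/479001600) - Real.cos y) (fun y : ℝ => (-y + y^3/6 - y^5/120 + y^7/5040 - y^9/362880 + y^11/39916800) - (-Real.sin y)) (by norm_num) ?_ ?_ hx
  · linarith [h]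
  · intro y
    have hp : HasDerivAt (fun y : ℝ => 1 - y^2/2 + y^4/24 - y^6/720 + y^8/40320 - y^10/3628800 + y^12/479001600) (-y + y^3/6 - y^5/120 + y^7/5040 - y^9/362880 + y^11/39916800) y := by
      have h0 := (((((((hasDerivAt_const y (1:ℝ)).sub ((hasDerivAt_pow 2 y).div_const 2)).add ((hasDerivAt_pow 4 y).div_const 24)).sub ((hasDerivAt_pow 6 y).div_const 720)).add ((hasDerivAt_pow 8 y).div_const 40320)).sub ((hasDerivAt_pow 10 y).div_const 3628800)).add ((hasDerivAt_pow 12 y).div_const 479001600))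
      exact h0.congr_deriv (by push_cast; ring)
    exact hp.sub (Real.hasDerivAt_cos y)
  · intro y hy
    have hprev := sin_ge11 y hy
    linarith

private lemma sin_le13 (x : ℝ) (hx : 0 ≤ x) : Real.sin x ≤ x - x^3/6 + x^5/120 - x^7/5040 + x^9/362880 - x^11/39916800 + x^13/6227020800 := by
  have h := nonneg_of_deriv_aux (fun y : ℝ => (y - y^3/6 + y^5/120 - y^7/5040 + y^9/362880 - y^11/39916800 + y^13/6227020800) - Real.sin y) (fun y : ℝ => (1 - y^2/2 + y^4/24 - y^6/720 + y^8/40320 - y^10/3628800 + y^12/479001600) - Real.cos y) (by norm_num) ?_ ?_ hx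
  · linarith [h]
  · intro y
    have hp : HasDerivAt (fun y : ℝ => y - y^3/6 + y^5/120 - y^7/5040 + y^9/362880 - y^11/39916800 + y^13/6227020800) (1 - y^2/2 + y^4/24 - y^6/720 + y^8/40320 - y^10/3628800 + y^12/479001600) y := by
      have h0 := (((((((hasDerivAt_id y).sub ((hasDerivAt_pow 3 y).div_const 6)).add ((hasDerivAt_pow 5 y).div_const 120)).sub ((hasDerivAt_pow 7 y).div_const 5040)).add ((hasDerivAt_pow 9 y).div_const 362880)).sub ((hasDerivAt_pow 11 y).div_const 39916800)).add ((hasDerivAt_pow 13 y).div_const 6227020800))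
      exact h0.congr_deriv (by push_cast; ring)
    exact hp.sub (Real.hasDerivAt_sin y)
  · intro y hy
    have hprev := cos_le12 y hy
    linarith

private lemma poly_key (x : ℝ) (hx : 0 ≤ x) (h6 : x ≤ 6) :
    (x^4/24 - x^6/720 + x^8/40320 - x^10/3628800 + x^12/479001600)^2
      + (x^5/120 - x^7/5040 + x^9/362880 - x^11/39916800 + x^13/6227020800)^2
      ≤ 5/24 * x^3 * (x^5/120 - x^7/5040 + x^9/362880 - x^11/39916800) := by
  have h36 : (0:ℝ) ≤ 36 - x^2 := by nlinarith
  have key : (36:ℝ)^8 * (5/24 * x^3 * (x^5/120 - x^7/5040 + x^9/362880 - x^11/39916800)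
      - (x^4/24 - x^6/720 + x^8/40320 - x^10/3628800 + x^12/479001600)^2
      - (x^5/120 - x^7/5040 + x^9/362880 - x^11/39916800 + x^13/6227020800)^2) =
      (1/201600) * (x^10 * (36 - x^2)^8)
      + (43/1209600) * (x^12 * (36 - x^2)^7)
      + (10403/93139200) * (x^14 * (36 - x^2)^6)
      + (619/3104640) * (x^16 * (36 - x^2)^5)
      + (131519/605404800) * (x^18 * (36 - x^2)^4)
      + (4357399/30270240000) * (x^20 * (36 - x^2)^3)
      + (1984753/36996960000) * (x^22 * (36 - x^2)^2)
      + (73261/8324316000) * (x^24 * (36 - x^2)^1)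
      + (140249/2164322160000) * (x^26 * (36 - x^2)^0) := by ring
  have hterm : ∀ (k m : ℕ), (0:ℝ) ≤ x^k * (36 - x^2)^m :=
    fun k m => mul_nonneg (pow_nonneg hx k) (pow_nonneg h36 m)
  nlinarith [key, hterm 10 8, hterm 12 7, hterm 14 6, hterm 16 5, hterm 18 4,
    hterm 20 3, hterm 22 2, hterm 24 1, hterm 26 0]

private lemma key_ineq (x : ℝ) (hx : 0 ≤ x) :
    (Real.cos x - 1 + x^2/2)^2 + (Real.sin x - x + x^3/6)^2
      ≤ 5/24 * x^3 * (Real.sin x - x + x^3/6) := by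
  have hA0 : 0 ≤ Real.cos x - 1 + x^2/2 := by
    have := Real.one_sub_sq_div_two_le_cos (x := x); linarith
  have hs0 : 0 ≤ Real.sin x - x + x^3/6 := by
    have := sin_ge3 x hx; linarith
  rcases le_total x 6 with h6 | h6
  · have hAU : Real.cos x - 1 + x^2/2
        ≤ x^4/24 - x^6/720 + x^8/40320 - x^10/3628800 + x^12/479001600 := by
      have := cos_le12 x hx; linarith
    have hsU : Real.sin x - x + x^3/6
        ≤ x^5/120 - x^7/5040 + x^9/362880 - x^11/39916800 + x^13/6227020800 := by
      have := sin_le13 x hx; linarith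
    have hsL : x^5/120 - x^7/5040 + x^9/362880 - x^11/39916800
        ≤ Real.sin x - x + x^3/6 := by
      have := sin_ge11 x hx; linarith
    have hA2 := pow_le_pow_left₀ hA0 hAU 2
    have hs2 := pow_le_pow_left₀ hs0 hsU 2
    have hpk := poly_key x hx h6
    have hx3 : (0:ℝ) ≤ 5/24*x^3 := by positivity
    nlinarith [mul_le_mul_of_nonneg_left hsL hx3]
  · have hc := Real.cos_le_one x
    have hs1 := Real.sin_le_one x
    have hs1' := Real.neg_one_le_sin x
    have hsU : Real.sin x - x + x^3/6 ≤ x^3/6 - x + 1 := by linarith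
    have hsL : x^3/6 - x - 1 ≤ Real.sin x - x + x^3/6 := by linarith
    have hA : Real.cos x - 1 + x^2/2 ≤ x^2/2 := by linarith
    have hA2 := pow_le_pow_left₀ hA0 hA 2
    have hCU : x^3/6 - x + 1 ≤ 5/24*x^3 := by nlinarith
    have hgnn : 0 ≤ (x^3/6 - x - 1)*(5/24*x^3 - (x^3/6 - x + 1)) - (x^2/2)^2 := by
      have hy : 0 ≤ x - 6 := by linarith
      nlinarith [pow_nonneg hy 2, pow_nonneg hy 3, pow_nonneg hy 4, pow_nonneg hy 5,
        pow_nonneg hy 6]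
    nlinarith [mul_nonneg (sub_nonneg.2 hsL) (sub_nonneg.2 hCU),
      mul_nonneg hs0 (sub_nonneg.2 hsU)]

private lemma real_part1 (l : ℝ) (hl : l ≤ 3/8) (x : ℝ) (hx : 0 ≤ x) :
    (Real.cos x - 1 + x^2/2)^2 + (Real.sin x - x + l*x^3/6)^2 ≤ ((1-l)*x^3/6)^2 := by
  have hk := key_ineq x hx
  have hs0 : 0 ≤ Real.sin x - x + x^3/6 := by have := sin_ge3 x hx; linarith
  have hx3 : (0:ℝ) ≤ x^3 := by positivity
  nlinarith [mul_nonneg (mul_nonneg (by linarith : (0:ℝ) ≤ 1 - l - 5/8) hx3) hs0]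
theorem q3_on_flat_part (x l : ℝ) (hl0 : 0 ≤ l) (hl : l ≤ 3 / 8) :
    ‖Complex.exp (Complex.I * x) - 1 - Complex.I * x + (x : ℂ) ^ 2 / 2 -
      (l : ℂ) * (Complex.I * x) ^ 3 / 6‖ ≤ (1 - l) * |x| ^ 3 / 6 ∧
    sSup {y : ℝ | ∃ z : ℝ, 0 < z ∧
      y = 6 / z ^ 3 *
        ‖Complex.exp (Complex.I * z) - 1 - Complex.I * z - (Complex.I * z) ^ 2 / 2 -
          (l : ℂ) * (Complex.I * z) ^ 3 / 6‖} = 1 - l := by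
  have hrepr : ∀ z : ℝ, Complex.exp (Complex.I * z) - 1 - Complex.I * z + (z : ℂ) ^ 2 / 2 -
      (l : ℂ) * (Complex.I * z) ^ 3 / 6
      = ((Real.cos z - 1 + z^2/2 : ℝ) : ℂ) + ((Real.sin z - z + l*z^3/6 : ℝ) : ℂ) * Complex.I := by
    intro z
    rw [mul_comm Complex.I (z:ℂ), Complex.exp_mul_I, ← Complex.ofReal_cos, ← Complex.ofReal_sin]
    push_cast
    linear_combination (-(l:ℂ) * (z:ℂ)^3/6 * Complex.I) * Complex.I_sq
  have hnorm : ∀ z : ℝ, ‖Complex.exp (Complex.I * z) - 1 - Complex.I * z + (z : ℂ) ^ 2 / 2 -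
      (l : ℂ) * (Complex.I * z) ^ 3 / 6‖
      = Real.sqrt ((Real.cos z - 1 + z^2/2)^2 + (Real.sin z - z + l*z^3/6)^2) := by
    intro z
    rw [hrepr z, Complex.norm_add_mul_I]
  have h1 : ∀ z : ℝ, ‖Complex.exp (Complex.I * z) - 1 - Complex.I * z + (z : ℂ) ^ 2 / 2 -
      (l : ℂ) * (Complex.I * z) ^ 3 / 6‖ ≤ (1 - l) * |z| ^ 3 / 6 := by
    intro z
    rw [hnorm z]
    have hb : (Real.cos z - 1 + z^2/2)^2 + (Real.sin z - z + l*z^3/6)^2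
        ≤ ((1 - l) * |z| ^ 3 / 6)^2 := by
      rcases le_total 0 z with hz | hz
      · rw [abs_of_nonneg hz]
        have := real_part1 l hl z hz
        nlinarith [this]
      · have h2 := real_part1 l hl (-z) (by linarith)
        rw [Real.cos_neg, Real.sin_neg] at h2
        rw [abs_of_nonpos hz]
        nlinarith [h2]
    have hr : (0:ℝ) ≤ (1 - l) * |z| ^ 3 / 6 := by
      have h1l : (0:ℝ) ≤ 1 - l := by linarith
      positivity
    calc Real.sqrt ((Real.cos z - 1 + z^2/2)^2 + (Real.sin z - z + l*z^3/6)^2)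
        ≤ Real.sqrt (((1 - l) * |z| ^ 3 / 6)^2) := Real.sqrt_le_sqrt hb
      _ = (1 - l) * |z| ^ 3 / 6 := Real.sqrt_sq hr
  refine ⟨h1 x, ?_⟩
  have hset : ∀ z : ℝ, Complex.exp (Complex.I * z) - 1 - Complex.I * z - (Complex.I * z) ^ 2 / 2 -
      (l : ℂ) * (Complex.I * z) ^ 3 / 6
      = Complex.exp (Complex.I * z) - 1 - Complex.I * z + (z : ℂ) ^ 2 / 2 -
      (l : ℂ) * (Complex.I * z) ^ 3 / 6 := by
    intro z
    linear_combination (-(z:ℂ)^2/2) * Complex.I_sq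
  set S := {y : ℝ | ∃ z : ℝ, 0 < z ∧
      y = 6 / z ^ 3 *
        ‖Complex.exp (Complex.I * z) - 1 - Complex.I * z - (Complex.I * z) ^ 2 / 2 -
          (l : ℂ) * (Complex.I * z) ^ 3 / 6‖} with hS
  have hmem : ∀ z : ℝ, 0 < z → (6 / z ^ 3 *
      ‖Complex.exp (Complex.I * z) - 1 - Complex.I * z + (z : ℂ) ^ 2 / 2 -
        (l : ℂ) * (Complex.I * z) ^ 3 / 6‖) ∈ S := by
    intro z hz
    exact ⟨z, hz, by rw [hset z]⟩
  have hub : ∀ y ∈ S, y ≤ 1 - l := by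
    rintro y ⟨z, hz, rfl⟩
    rw [hset z]
    have hz3 : (0:ℝ) < z ^ 3 := by positivity
    have hzb := h1 z
    rw [abs_of_pos hz] at hzb
    calc 6 / z ^ 3 * ‖Complex.exp (Complex.I * z) - 1 - Complex.I * z + (z : ℂ) ^ 2 / 2 -
          (l : ℂ) * (Complex.I * z) ^ 3 / 6‖
        ≤ 6 / z ^ 3 * ((1 - l) * z ^ 3 / 6) := by
          apply mul_le_mul_of_nonneg_left hzb (by positivity)
      _ = 1 - l := by field_simp
  have hne : S.Nonempty := ⟨_, hmem 1 one_pos⟩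
  have hbdd : BddAbove S := ⟨1 - l, hub⟩
  apply le_antisymm (csSup_le hne hub)
  apply le_of_forall_pos_le_add
  intro ε hε
  set z := min ε 1 with hzdef
  have hz0 : 0 < z := lt_min hε one_pos
  have hz1 : z ≤ 1 := min_le_right _ _
  have hzε : z ≤ ε := min_le_left _ _
  have hlow : 1 - l - z/2 ≤ 6 / z ^ 3 *
      ‖Complex.exp (Complex.I * z) - 1 - Complex.I * z + (z : ℂ) ^ 2 / 2 -
        (l : ℂ) * (Complex.I * z) ^ 3 / 6‖ := by
    have h2 : (1-l)*z^3/6 - z^5/120 ≤ ‖Complex.exp (Complex.I * z) - 1 - Complex.I * z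
        + (z : ℂ) ^ 2 / 2 - (l : ℂ) * (Complex.I * z) ^ 3 / 6‖ := by
      have hiv : (Complex.exp (Complex.I * z) - 1 - Complex.I * z + (z : ℂ) ^ 2 / 2 -
          (l : ℂ) * (Complex.I * z) ^ 3 / 6).im = Real.sin z - z + l*z^3/6 := by
        rw [hrepr z]
        simp only [Complex.add_im, Complex.ofReal_im, Complex.mul_im, Complex.ofReal_re,
          Complex.I_im, Complex.I_re, mul_zero, mul_one, zero_add, zero_mul, add_zero]
      have him := Complex.abs_im_le_norm (Complex.exp (Complex.I * z) - 1 - Complex.I * z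
          + (z : ℂ) ^ 2 / 2 - (l : ℂ) * (Complex.I * z) ^ 3 / 6)
      rw [hiv] at him
      have hnle : -(Real.sin z - z + l*z^3/6) ≤ |Real.sin z - z + l*z^3/6| := neg_le_abs _
      have hs5 := sin_le5 z hz0.le
      linarith
    have hz3 : (0:ℝ) < z ^ 3 := by positivity
    have heq : 6 / z ^ 3 * ((1-l)*z^3/6 - z^5/120) = 1 - l - z^2/20 := by
      field_simp; ring
    calc 1 - l - z/2 ≤ 1 - l - z^2/20 := by nlinarith
      _ = 6 / z ^ 3 * ((1-l)*z^3/6 - z^5/120) := heq.symm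
      _ ≤ _ := mul_le_mul_of_nonneg_left h2 (by positivity)
  have hsup := le_csSup hbdd (hmem z hz0)
  linarith
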